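/- arXiv:2001.01201 — 2 statements merged into one kernel-verified Lean document; each statement's English description precedes it below -/
import Mathlib

section
/- Fix N > 0. There exist constants C > 0 and a₀ > 0 such that for all a with 0 < a ≤ a₀, | ∫_ℝ q₀(z)·L(z)² dz − (∫_ℝ q₀(z)·L(z) dz)² − 2a⁴/N² | ≤ C·a⁶. In other words, the variance of the log-likelihood ratio L under q₀ equals 2a⁴/N² + O(a⁶) as a → 0⁺. -/
open MeasureTheory

/-- Density of the Gaussian distribution with mean `0` and variance `N/2`. -/
noncomputable def q0 (N z : ℝ) : ℝ := (Real.sqrt (Real.pi * N))⁻¹ * Real.exp (-z ^ 2 / N)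

/-- Density of the Gaussian distribution with mean `a` and variance `N/2`. -/
noncomputable def qa (N a z : ℝ) : ℝ := (Real.sqrt (Real.pi * N))⁻¹ * Real.exp (-(z - a) ^ 2 / N)

/-- The binary mixture density `½ q_a + ½ q_{-a}`. -/
noncomputable def qmix (N a z : ℝ) : ℝ := (1 / 2) * qa N a z + (1 / 2) * qa N (-a) z

/-- The log-likelihood ratio `log (q̃(z)/q₀(z))`. -/
noncomputable def llr (N a z : ℝ) : ℝ := Real.log (qmix N a z / q0 N z)

open Real

-- integrability of x^n * exp(-b x^2)
lemma int_pg {b : ℝ} (hb : 0 < b) (n : ℕ) :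
    Integrable fun x : ℝ => x ^ n * Real.exp (-b * x ^ 2) := by
  have hb2 : 0 < b / 2 := by linarith
  set C : ℝ := 1 + (2 / b) ^ n * n.factorial with hC
  have hCpos : 0 < C := by positivity
  refine Integrable.mono' ((integrable_exp_neg_mul_sq hb2).const_mul C)
    ((continuous_pow n).mul (by continuity)).aestronglyMeasurable
    (Filter.Eventually.of_forall fun x => ?_)
  rw [Real.norm_eq_abs, abs_mul, abs_of_nonneg (Real.exp_pos _).le, abs_pow]
  have h1 : |x| ^ n ≤ 1 + (x ^ 2) ^ n := by
    rcases le_total |x| 1 with h | h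
    · have h' := pow_le_one₀ (abs_nonneg x) h (n := n)
      nlinarith [pow_nonneg (sq_nonneg x) n]
    · calc |x| ^ n ≤ (|x| ^ 2) ^ n := by
            rw [← pow_mul]
            exact pow_le_pow_right₀ h (by omega)
        _ = (x ^ 2) ^ n := by rw [sq_abs]
        _ ≤ 1 + (x ^ 2) ^ n := by linarith
  have h2 : (x ^ 2) ^ n ≤ (2 / b) ^ n * n.factorial * Real.exp (b / 2 * x ^ 2) := by
    have ht : 0 ≤ b / 2 * x ^ 2 := by positivity
    have hexp : (b / 2 * x ^ 2) ^ n / n.factorial ≤ Real.exp (b / 2 * x ^ 2) := by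
      have := Real.sum_le_exp_of_nonneg ht (n + 1)
      refine le_trans ?_ this
      have : (b / 2 * x ^ 2) ^ n / n.factorial
          = ∑ i ∈ Finset.range (n+1), if i = n then (b / 2 * x ^ 2) ^ i / i.factorial else 0 := by
        simp
      rw [this]
      apply Finset.sum_le_sum
      intro i hi
      split
      · simp
      · positivity
    have hfac : (0:ℝ) < n.factorial := by positivity
    rw [div_le_iff₀ hfac] at hexp
    have key : (x ^ 2) ^ n = (2 / b) ^ n * (b / 2 * x ^ 2) ^ n := by
      rw [← mul_pow]
      congr 1
      field_simp
    rw [key]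
    calc (2 / b) ^ n * (b / 2 * x ^ 2) ^ n
        ≤ (2 / b) ^ n * (Real.exp (b / 2 * x ^ 2) * n.factorial) := by
          apply mul_le_mul_of_nonneg_left hexp (by positivity)
      _ = (2 / b) ^ n * n.factorial * Real.exp (b / 2 * x ^ 2) := by ring
  have h3 : |x| ^ n ≤ C * Real.exp (b / 2 * x ^ 2) := by
    calc |x| ^ n ≤ 1 + (x ^ 2) ^ n := h1
      _ ≤ 1 * Real.exp (b / 2 * x ^ 2) + (2 / b) ^ n * n.factorial * Real.exp (b / 2 * x ^ 2) := by
          have he := Real.one_le_exp (show (0:ℝ) ≤ b / 2 * x ^ 2 by positivity)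
          have : (1:ℝ) ≤ 1 * Real.exp (b / 2 * x ^ 2) := by linarith
          linarith
      _ = C * Real.exp (b / 2 * x ^ 2) := by rw [hC]; ring
  calc |x| ^ n * Real.exp (-b * x ^ 2)
      ≤ C * Real.exp (b / 2 * x ^ 2) * Real.exp (-b * x ^ 2) :=
        mul_le_mul_of_nonneg_right h3 (Real.exp_pos _).le
    _ = C * Real.exp (-(b / 2) * x ^ 2) := by
        rw [mul_assoc, ← Real.exp_add]; ring_nf

lemma Jrec {b : ℝ} (hb : 0 < b) (n : ℕ) :
    ∫ x : ℝ, x ^ (n + 2) * Real.exp (-b * x ^ 2)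
      = ((n + 1) / (2 * b)) * ∫ x : ℝ, x ^ n * Real.exp (-b * x ^ 2) := by
  set f : ℝ → ℝ := fun x => x ^ (n + 1) * Real.exp (-b * x ^ 2) with hf
  set f' : ℝ → ℝ := fun x =>
    ((n : ℝ) + 1) * (x ^ n * Real.exp (-b * x ^ 2)) - (2 * b) * (x ^ (n + 2) * Real.exp (-b * x ^ 2)) with hf'
  have hderiv : ∀ x : ℝ, HasDerivAt f (f' x) x := by
    intro x
    have h1 : HasDerivAt (fun x : ℝ => -b * x ^ 2) (-b * (2 * x ^ 1)) x :=
      (hasDerivAt_pow 2 x).const_mul (-b)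
    have h2 := ((h1.exp)).const_mul (1:ℝ)
    have h3 : HasDerivAt (fun y : ℝ => y ^ (n + 1) * Real.exp (-b * y ^ 2)) _ x :=
      (hasDerivAt_pow (n + 1) x).mul h1.exp
    convert h3 using 1
    simp only [hf', Nat.cast_add, Nat.cast_one]
    push_cast
    ring
  have hint_f' : Integrable f' :=
    (((int_pg hb n).const_mul _).sub ((int_pg hb (n + 2)).const_mul _))
  have hint_f : Integrable f := int_pg hb (n + 1)
  have h0 := integral_eq_zero_of_hasDerivAt_of_integrable hderiv hint_f' hint_f
  rw [hf'] at h0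
  rw [integral_sub ((int_pg hb n).const_mul _) ((int_pg hb (n + 2)).const_mul _),
    MeasureTheory.integral_const_mul, MeasureTheory.integral_const_mul] at h0
  have hb' : (2 * b) ≠ 0 := by positivity
  rw [div_mul_eq_mul_div, eq_div_iff hb']
  linarith

lemma q0_eq (N : ℝ) (z : ℝ) : q0 N z = (Real.sqrt (Real.pi * N))⁻¹ * Real.exp (-(N⁻¹) * z ^ 2) := by
  unfold q0; congr 1; ring_nf

lemma q0_pow_int (N : ℝ) (hN : 0 < N) (k : ℕ) :
    Integrable fun z : ℝ => q0 N z * z ^ k := by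
  have h : (fun z : ℝ => q0 N z * z ^ k)
      = fun z => (Real.sqrt (Real.pi * N))⁻¹ * (z ^ k * Real.exp (-(N⁻¹) * z ^ 2)) := by
    funext z; rw [q0_eq]; ring
  rw [h]
  exact (int_pg (by positivity) k).const_mul _

lemma q0_moments (N : ℝ) (hN : 0 < N) :
    (∫ z : ℝ, q0 N z * z ^ 0) = 1 ∧ (∫ z : ℝ, q0 N z * z ^ 2) = N / 2 ∧
    (∫ z : ℝ, q0 N z * z ^ 4) = 3 * N ^ 2 / 4 ∧ (∫ z : ℝ, q0 N z * z ^ 6) = 15 * N ^ 3 / 8 ∧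
    (∫ z : ℝ, q0 N z * z ^ 8) = 105 * N ^ 4 / 16 ∧
    (∫ z : ℝ, q0 N z * z ^ 10) = 945 * N ^ 5 / 32 ∧
    (∫ z : ℝ, q0 N z * z ^ 12) = 10395 * N ^ 6 / 64 := by
  have hb : (0:ℝ) < N⁻¹ := by positivity
  have hsq : (0:ℝ) < Real.sqrt (Real.pi * N) := Real.sqrt_pos.mpr (by positivity)
  set c : ℝ := (Real.sqrt (Real.pi * N))⁻¹ with hc
  set J : ℕ → ℝ := fun k => ∫ z : ℝ, z ^ k * Real.exp (-(N⁻¹) * z ^ 2) with hJ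
  have hM : ∀ k : ℕ, (∫ z : ℝ, q0 N z * z ^ k) = c * J k := by
    intro k
    have h : (fun z : ℝ => q0 N z * z ^ k)
        = fun z => c * (z ^ k * Real.exp (-(N⁻¹) * z ^ 2)) := by
      funext z; rw [q0_eq]; ring
    rw [h, MeasureTheory.integral_const_mul]
  have hJ0 : J 0 = Real.sqrt (Real.pi * N) := by
    have h := integral_gaussian N⁻¹
    have : Real.pi / N⁻¹ = Real.pi * N := by field_simp
    simp only [hJ, pow_zero, one_mul]
    rw [h, this]
  have hrec : ∀ n : ℕ, J (n + 2) = ((n + 1) * N / 2) * J n := by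
    intro n
    have h := Jrec hb n
    have heq : ((n:ℝ) + 1) / (2 * N⁻¹) = ((n:ℝ) + 1) * N / 2 := by
      rw [div_eq_div_iff (by positivity) (by norm_num)]
      field_simp
    show (∫ z : ℝ, z ^ (n+2) * Real.exp (-(N⁻¹) * z ^ 2)) = _
    rw [h, heq]
  have hcJ0 : c * J 0 = 1 := by rw [hJ0, hc]; field_simp
  have h2 : J 2 = (N / 2) * J 0 := by have := hrec 0; rw [this]; norm_num
  have h4 : J 4 = (3 * N ^ 2 / 4) * J 0 := by have := hrec 2; rw [this, h2]; push_cast; ring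
  have h6 : J 6 = (15 * N ^ 3 / 8) * J 0 := by have := hrec 4; rw [this, h4]; push_cast; ring
  have h8 : J 8 = (105 * N ^ 4 / 16) * J 0 := by have := hrec 6; rw [this, h6]; push_cast; ring
  have h10 : J 10 = (945 * N ^ 5 / 32) * J 0 := by have := hrec 8; rw [this, h8]; push_cast; ring
  have h12 : J 12 = (10395 * N ^ 6 / 64) * J 0 := by
    have := hrec 10; rw [this, h10]; push_cast; ring
  refine ⟨?_, ?_, ?_, ?_, ?_, ?_, ?_⟩ <;>
    simp only [hM, h2, h4, h6, h8, h10, h12] <;>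
    [skip; skip; skip; skip; skip; skip; skip] <;>
    first
      | (rw [hcJ0])
      | (rw [show ∀ r : ℝ, c * (r * J 0) = r * (c * J 0) from fun r => by ring, hcJ0, mul_one])

lemma int_poly (N : ℝ) (hN : 0 < N) (c0 c2 c4 c6 c8 c10 c12 : ℝ) :
    (Integrable fun z : ℝ => q0 N z *
      (c0 + c2 * z ^ 2 + c4 * z ^ 4 + c6 * z ^ 6 + c8 * z ^ 8 + c10 * z ^ 10 + c12 * z ^ 12)) ∧
    (∫ z : ℝ, q0 N z *
      (c0 + c2 * z ^ 2 + c4 * z ^ 4 + c6 * z ^ 6 + c8 * z ^ 8 + c10 * z ^ 10 + c12 * z ^ 12))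
      = c0 + c2 * (N / 2) + c4 * (3 * N ^ 2 / 4) + c6 * (15 * N ^ 3 / 8)
        + c8 * (105 * N ^ 4 / 16) + c10 * (945 * N ^ 5 / 32) + c12 * (10395 * N ^ 6 / 64) := by
  have hfun : (fun z : ℝ => q0 N z *
      (c0 + c2 * z ^ 2 + c4 * z ^ 4 + c6 * z ^ 6 + c8 * z ^ 8 + c10 * z ^ 10 + c12 * z ^ 12))
      = fun z : ℝ => c0 * (q0 N z * z ^ 0) + (c2 * (q0 N z * z ^ 2) + (c4 * (q0 N z * z ^ 4)
        + (c6 * (q0 N z * z ^ 6) + (c8 * (q0 N z * z ^ 8) + (c10 * (q0 N z * z ^ 10)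
        + c12 * (q0 N z * z ^ 12)))))) := by
    funext z; ring
  have i0 := (q0_pow_int N hN 0).const_mul c0
  have i2 := (q0_pow_int N hN 2).const_mul c2
  have i4 := (q0_pow_int N hN 4).const_mul c4
  have i6 := (q0_pow_int N hN 6).const_mul c6
  have i8 := (q0_pow_int N hN 8).const_mul c8
  have i10 := (q0_pow_int N hN 10).const_mul c10
  have i12 := (q0_pow_int N hN 12).const_mul c12
  have I10 : Integrable (fun z : ℝ => c10 * (q0 N z * z ^ 10) + c12 * (q0 N z * z ^ 12)) :=
    i10.add i12
  have I8 : Integrable (fun z : ℝ => c8 * (q0 N z * z ^ 8)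
      + (c10 * (q0 N z * z ^ 10) + c12 * (q0 N z * z ^ 12))) := i8.add I10
  have I6 : Integrable (fun z : ℝ => c6 * (q0 N z * z ^ 6) + (c8 * (q0 N z * z ^ 8)
      + (c10 * (q0 N z * z ^ 10) + c12 * (q0 N z * z ^ 12)))) := i6.add I8
  have I4 : Integrable (fun z : ℝ => c4 * (q0 N z * z ^ 4) + (c6 * (q0 N z * z ^ 6)
      + (c8 * (q0 N z * z ^ 8) + (c10 * (q0 N z * z ^ 10) + c12 * (q0 N z * z ^ 12))))) :=
    i4.add I6
  have I2 : Integrable (fun z : ℝ => c2 * (q0 N z * z ^ 2) + (c4 * (q0 N z * z ^ 4)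
      + (c6 * (q0 N z * z ^ 6) + (c8 * (q0 N z * z ^ 8)
      + (c10 * (q0 N z * z ^ 10) + c12 * (q0 N z * z ^ 12)))))) := i2.add I4
  constructor
  · rw [hfun]
    exact i0.add I2
  · obtain ⟨m0, m2, m4, m6, m8, m10, m12⟩ := q0_moments N hN
    rw [hfun, integral_add i0 I2, integral_add i2 I4, integral_add i4 I6, integral_add i6 I8,
      integral_add i8 I10, integral_add i10 i12,
      integral_const_mul, integral_const_mul, integral_const_mul, integral_const_mul,
      integral_const_mul, integral_const_mul, integral_const_mul,
      m0, m2, m4, m6, m8, m10, m12]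
    ring

lemma q0_pos {N : ℝ} (hN : 0 < N) (z : ℝ) : 0 < q0 N z := by
  unfold q0
  have : (0:ℝ) < Real.sqrt (Real.pi * N) := Real.sqrt_pos.mpr (by positivity)
  positivity

lemma llr_eq (N a : ℝ) (hN : 0 < N) (z : ℝ) :
    llr N a z = -a ^ 2 / N + Real.log (Real.cosh (2 * a * z / N)) := by
  have hkey : qmix N a z = q0 N z * (Real.exp (-a ^ 2 / N) * Real.cosh (2 * a * z / N)) := by
    unfold qmix qa q0
    rw [Real.cosh_eq]
    have e1 : Real.exp (-(z - a) ^ 2 / N)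
        = Real.exp (-z ^ 2 / N) * (Real.exp (-a ^ 2 / N) * Real.exp (2 * a * z / N)) := by
      rw [← Real.exp_add, ← Real.exp_add]; congr 1; ring
    have e2 : Real.exp (-(z - -a) ^ 2 / N)
        = Real.exp (-z ^ 2 / N) * (Real.exp (-a ^ 2 / N) * Real.exp (-(2 * a * z / N))) := by
      rw [← Real.exp_add, ← Real.exp_add]; congr 1; ring
    rw [e1, e2]
    ring
  unfold _root_.llr
  rw [hkey, mul_comm (q0 N z), mul_div_assoc, div_self (ne_of_gt (q0_pos hN z)), mul_one,
    Real.log_mul (Real.exp_ne_zero _) (ne_of_gt (Real.cosh_pos _)), Real.log_exp]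

set_option maxHeartbeats 2000000 in
lemma logcosh_bound (t : ℝ) :
    |Real.log (Real.cosh t) - (t ^ 2 / 2 - t ^ 4 / 12)| ≤ 2 * t ^ 6 := by
  rcases le_total 1 (t ^ 2) with ht | ht
  · -- |t| ≥ 1 : crude bound
    have h0 : 0 ≤ Real.log (Real.cosh t) := Real.log_nonneg (Real.one_le_cosh t)
    have hle : Real.cosh t ≤ Real.exp |t| := by
      rw [← Real.cosh_abs, Real.cosh_eq]
      have : Real.exp (-|t|) ≤ Real.exp |t| := Real.exp_le_exp.mpr (by linarith [abs_nonneg t])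
      linarith
    have h1 : Real.log (Real.cosh t) ≤ |t| :=
      (Real.log_le_iff_le_exp (Real.cosh_pos t)).mpr hle
    have habs : |t| ^ 2 = t ^ 2 := sq_abs t
    have habs1 : 1 ≤ |t| := by nlinarith [abs_nonneg t]
    have habs6 : |t| ^ 6 = t ^ 6 := by rw [pow_abs, abs_of_nonneg (by positivity)]
    have h2 : |t| ≤ t ^ 6 := by
      calc |t| = |t| ^ 1 := (pow_one _).symm
        _ ≤ |t| ^ 6 := pow_le_pow_right₀ habs1 (by norm_num)
        _ = t ^ 6 := habs6
    have h3 : t ^ 2 ≤ t ^ 6 := by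
      calc t ^ 2 = |t| ^ 2 := (sq_abs t).symm
        _ ≤ |t| ^ 6 := pow_le_pow_right₀ habs1 (by norm_num)
        _ = t ^ 6 := habs6
    have h4 : t ^ 4 ≤ t ^ 6 := by
      calc t ^ 4 = |t| ^ 4 := by rw [pow_abs, abs_of_nonneg (by positivity)]
        _ ≤ |t| ^ 6 := pow_le_pow_right₀ habs1 (by norm_num)
        _ = t ^ 6 := habs6
    rw [abs_le]
    constructor <;> nlinarith
  · -- |t| ≤ 1 : Taylor expansion
    have habs : |t| ≤ 1 := abs_le.mpr (by constructor <;> nlinarith [abs_nonneg t, sq_abs t])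
    have habs6 : |t| ^ 6 = t ^ 6 := by
      rw [pow_abs, abs_of_nonneg (by positivity)]
    have hb1 := Real.exp_bound habs (n := 6) (by norm_num)
    have habs' : |(-t)| ≤ 1 := by rwa [abs_neg]
    have hb2 := Real.exp_bound habs' (n := 6) (by norm_num)
    simp only [Finset.sum_range_succ, Finset.sum_range_zero, Nat.factorial] at hb1 hb2
    norm_num at hb1 hb2
    rw [habs6] at hb1 hb2
    have hcosh : |Real.cosh t - (1 + t ^ 2 / 2 + t ^ 4 / 24)| ≤ 7 / 4320 * t ^ 6 := by
      rw [Real.cosh_eq]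
      rw [abs_le] at hb1 hb2 ⊢
      constructor <;> [nlinarith [hb1.1, hb2.1]; nlinarith [hb1.2, hb2.2]]
    obtain ⟨u, hu_def⟩ : ∃ u : ℝ, u = Real.cosh t - 1 := ⟨_, rfl⟩
    have hu0 : 0 ≤ u := by rw [hu_def]; linarith [Real.one_le_cosh t]
    have ht6 : t ^ 6 ≤ t ^ 2 := by nlinarith [sq_nonneg t, sq_nonneg (t^2)]
    have ht4 : t ^ 4 ≤ t ^ 2 := by nlinarith [sq_nonneg t]
    have ht8 : t ^ 8 ≤ t ^ 6 := by nlinarith [sq_nonneg (t^3)]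
    have ht60 : 0 ≤ t ^ 6 := by positivity
    have hu1 : u ≤ 5 / 9 * t ^ 2 := by
      rw [abs_le] at hcosh
      rw [hu_def]
      nlinarith [hcosh.2]
    rw [abs_le] at hcosh
    have hu59 : u ≤ 5 / 9 := by nlinarith
    have hu_lt : |(-u)| < 1 := by rw [abs_neg, abs_of_nonneg hu0]; linarith
    have hlog := Real.abs_log_sub_add_sum_range_le hu_lt 2
    simp only [Finset.sum_range_succ, Finset.sum_range_zero] at hlog
    rw [abs_neg, abs_of_nonneg hu0] at hlog
    have hone : 1 - -u = Real.cosh t := by rw [hu_def]; ring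
    rw [hone] at hlog
    norm_num at hlog
    -- hlog : |(-u + u^2/2) + log (cosh t)| ≤ u^3/(1-u)  (roughly)
    have hA : |Real.log (Real.cosh t) - (u - u ^ 2 / 2)| ≤ u ^ 3 / (1 - u) := by
      have : Real.log (Real.cosh t) - (u - u ^ 2 / 2) = -u + u ^ 2 / 2 + Real.log (Real.cosh t) := by
        ring
      rw [this]
      convert hlog using 2 <;> ring
    have hA2 : u ^ 3 / (1 - u) ≤ 9 / 4 * u ^ 3 := by
      rw [div_le_iff₀ (by linarith : (0:ℝ) < 1 - u)]
      nlinarith [mul_nonneg (pow_nonneg hu0 3) (show (0:ℝ) ≤ 5 / 4 - 9 / 4 * u by linarith)]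
    have hu3 : u ^ 3 ≤ 125 / 729 * t ^ 6 := by
      have := pow_le_pow_left₀ hu0 hu1 3
      calc u ^ 3 ≤ (5 / 9 * t ^ 2) ^ 3 := this
        _ = 125 / 729 * t ^ 6 := by ring
    -- second piece
    obtain ⟨A, hA_def⟩ : ∃ A : ℝ, A = u - (t ^ 2 / 2 + t ^ 4 / 24) := ⟨_, rfl⟩
    obtain ⟨B, hB_def⟩ : ∃ B : ℝ, B = u ^ 2 - (t ^ 2 / 2 + t ^ 4 / 24) ^ 2 := ⟨_, rfl⟩
    have hAb : |A| ≤ 7 / 4320 * t ^ 6 := by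
      rw [hA_def, hu_def, abs_le]
      constructor <;> linarith [hcosh.1, hcosh.2]
    have hBb : |B| ≤ 2 * (7 / 4320) * t ^ 6 := by
      have hfac : B = A * (u + (t ^ 2 / 2 + t ^ 4 / 24)) := by rw [hA_def, hB_def]; ring
      rw [hfac, abs_mul]
      have h1 : |u + (t ^ 2 / 2 + t ^ 4 / 24)| ≤ 2 := by
        rw [abs_of_nonneg (by positivity)]
        nlinarith
      calc |A| * |u + (t ^ 2 / 2 + t ^ 4 / 24)| ≤ (7 / 4320 * t ^ 6) * 2 :=
            mul_le_mul hAb h1 (abs_nonneg _) (by positivity)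
        _ = 2 * (7 / 4320) * t ^ 6 := by ring
    have hsecond : |(u - u ^ 2 / 2) - (t ^ 2 / 2 - t ^ 4 / 12)| ≤ 1 / 2 * t ^ 6 := by
      have expand : (u - u ^ 2 / 2) - (t ^ 2 / 2 - t ^ 4 / 12)
          = A - B / 2 - t ^ 6 / 48 - t ^ 8 / 1152 := by
        rw [hA_def, hB_def]; ring
      rw [expand, abs_le]
      rw [abs_le] at hAb hBb
      constructor <;> linarith [hAb.1, hAb.2, hBb.1, hBb.2, sq_nonneg (t ^ 4), ht60]
    calc |Real.log (Real.cosh t) - (t ^ 2 / 2 - t ^ 4 / 12)|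
        ≤ |Real.log (Real.cosh t) - (u - u ^ 2 / 2)|
          + |(u - u ^ 2 / 2) - (t ^ 2 / 2 - t ^ 4 / 12)| := abs_sub_le _ _ _
      _ ≤ 9 / 4 * (125 / 729 * t ^ 6) + 1 / 2 * t ^ 6 := by
          have := hA.trans hA2
          have h9 : 9 / 4 * u ^ 3 ≤ 9 / 4 * (125 / 729 * t ^ 6) := by linarith
          linarith
      _ ≤ 2 * t ^ 6 := by nlinarith

set_option maxHeartbeats 4000000 in
/-- The variance of the log-likelihood ratio `L` under `q₀` equals `2a⁴/N² + O(a⁶)`. -/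
theorem var_llr_q0 (N : ℝ) (hN : 0 < N) :
    ∃ C > (0 : ℝ), ∃ a₀ > (0 : ℝ), ∀ a : ℝ, 0 < a → a ≤ a₀ →
      |(∫ z : ℝ, q0 N z * (llr N a z) ^ 2) - (∫ z : ℝ, q0 N z * llr N a z) ^ 2
        - 2 * a ^ 4 / N ^ 2| ≤ C * a ^ 6 := by
  refine ⟨(3840 / N ^ 4 + 10080 / N ^ 5 + 2661120 / N ^ 6) + (8 / N ^ 3 + 35 / (3 * N ^ 4))
      + (1 / N ^ 2 + 240 / N ^ 3) ^ 2, by positivity, 1, one_pos, fun a ha0 ha1 => ?_⟩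
  have hq0c : Continuous (q0 N) := by
    unfold q0
    exact continuous_const.mul ((continuous_pow 2).neg.div_const N).rexp
  have hq0nn : ∀ z : ℝ, 0 ≤ q0 N z := fun z => (q0_pos hN z).le
  have hLc : Continuous (llr N a) := by
    have h : llr N a = fun z => -a ^ 2 / N + Real.log (Real.cosh (2 * a * z / N)) :=
      funext (llr_eq N a hN)
    rw [h]
    exact continuous_const.add ((Real.continuous_cosh.comp
      ((continuous_const.mul continuous_id).div_const N)).log
      fun z => ne_of_gt (Real.cosh_pos _))
  -- pointwise remainder bound
  set P : ℝ → ℝ := fun z => -a ^ 2 / N + 2 * a ^ 2 / N ^ 2 * z ^ 2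
      + -(4 * a ^ 4 / (3 * N ^ 4)) * z ^ 4 with hP_def
  have hR : ∀ z : ℝ, |llr N a z - P z| ≤ 128 * a ^ 6 / N ^ 6 * z ^ 6 := by
    intro z
    have h := logcosh_bound (2 * a * z / N)
    have heq : llr N a z - P z
        = Real.log (Real.cosh (2 * a * z / N))
          - ((2 * a * z / N) ^ 2 / 2 - (2 * a * z / N) ^ 4 / 12) := by
      rw [llr_eq N a hN z, hP_def]; ring
    rw [heq]
    calc |Real.log (Real.cosh (2 * a * z / N))
          - ((2 * a * z / N) ^ 2 / 2 - (2 * a * z / N) ^ 4 / 12)|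
        ≤ 2 * (2 * a * z / N) ^ 6 := h
      _ = 128 * a ^ 6 / N ^ 6 * z ^ 6 := by ring
  have hPabs : ∀ z : ℝ, |P z| ≤ a ^ 2 / N + 2 * a ^ 2 / N ^ 2 * z ^ 2
      + 4 * a ^ 4 / (3 * N ^ 4) * z ^ 4 := by
    intro z
    have hz4 : (0:ℝ) ≤ z ^ 4 := by positivity
    have hPz : P z = -a ^ 2 / N + 2 * a ^ 2 / N ^ 2 * z ^ 2
        + -(4 * a ^ 4 / (3 * N ^ 4)) * z ^ 4 := by rw [hP_def]
    rw [hPz, abs_le]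
    constructor
    · rw [← sub_nonneg]
      have e : -a ^ 2 / N + 2 * a ^ 2 / N ^ 2 * z ^ 2 + -(4 * a ^ 4 / (3 * N ^ 4)) * z ^ 4
          - -(a ^ 2 / N + 2 * a ^ 2 / N ^ 2 * z ^ 2 + 4 * a ^ 4 / (3 * N ^ 4) * z ^ 4)
          = 4 * a ^ 2 / N ^ 2 * z ^ 2 := by ring
      rw [e]; positivity
    · rw [← sub_nonneg]
      have e : a ^ 2 / N + 2 * a ^ 2 / N ^ 2 * z ^ 2 + 4 * a ^ 4 / (3 * N ^ 4) * z ^ 4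
          - (-a ^ 2 / N + 2 * a ^ 2 / N ^ 2 * z ^ 2 + -(4 * a ^ 4 / (3 * N ^ 4)) * z ^ 4)
          = 2 * a ^ 2 / N + 8 * a ^ 4 / (3 * N ^ 4) * z ^ 4 := by ring
      rw [e]; positivity
  have hLabs : ∀ z : ℝ, |llr N a z| ≤ a ^ 2 / N + 2 * a ^ 2 / N ^ 2 * z ^ 2
      + 4 * a ^ 4 / (3 * N ^ 4) * z ^ 4 + 128 * a ^ 6 / N ^ 6 * z ^ 6 := by
    intro z
    calc |llr N a z| = |(llr N a z - P z) + P z| := by ring_nf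
      _ ≤ |llr N a z - P z| + |P z| := abs_add_le _ _
      _ ≤ _ := by
          have := hR z; have := hPabs z; linarith
  -- integrability
  have hiP : Integrable (fun z : ℝ => q0 N z * P z) := by
    have h := (int_poly N hN (-a ^ 2 / N) (2 * a ^ 2 / N ^ 2) (-(4 * a ^ 4 / (3 * N ^ 4)))
      0 0 0 0).1
    have heq : (fun z : ℝ => q0 N z * P z)
        = fun z : ℝ => q0 N z * (-a ^ 2 / N + 2 * a ^ 2 / N ^ 2 * z ^ 2
          + -(4 * a ^ 4 / (3 * N ^ 4)) * z ^ 4 + 0 * z ^ 6 + 0 * z ^ 8 + 0 * z ^ 10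
          + 0 * z ^ 12) := by
      funext z; rw [hP_def]; ring
    rw [heq]; exact h
  have hiL : Integrable (fun z : ℝ => q0 N z * llr N a z) := by
    refine Integrable.mono' (int_poly N hN (a ^ 2 / N) (2 * a ^ 2 / N ^ 2)
      (4 * a ^ 4 / (3 * N ^ 4)) (128 * a ^ 6 / N ^ 6) 0 0 0).1
      (hq0c.mul hLc).aestronglyMeasurable
      (Filter.Eventually.of_forall fun z => ?_)
    rw [Real.norm_eq_abs, abs_mul, abs_of_nonneg (hq0nn z)]
    have h := hLabs z
    have h2 : q0 N z * |llr N a z| ≤ q0 N z * (a ^ 2 / N + 2 * a ^ 2 / N ^ 2 * z ^ 2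
        + 4 * a ^ 4 / (3 * N ^ 4) * z ^ 4 + 128 * a ^ 6 / N ^ 6 * z ^ 6) :=
      mul_le_mul_of_nonneg_left h (hq0nn z)
    calc q0 N z * |llr N a z| ≤ _ := h2
      _ = q0 N z * (a ^ 2 / N + 2 * a ^ 2 / N ^ 2 * z ^ 2 + 4 * a ^ 4 / (3 * N ^ 4) * z ^ 4
          + 128 * a ^ 6 / N ^ 6 * z ^ 6 + 0 * z ^ 8 + 0 * z ^ 10 + 0 * z ^ 12) := by ring
  have hiL2 : Integrable (fun z : ℝ => q0 N z * llr N a z ^ 2) := by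
    refine Integrable.mono' (int_poly N hN (a ^ 4 / N ^ 2) (4 * a ^ 4 / N ^ 3)
      (8 / 3 * a ^ 6 / N ^ 5 + 4 * a ^ 4 / N ^ 4) (256 * a ^ 8 / N ^ 7 + 16 / 3 * a ^ 6 / N ^ 6)
      (4624 / 9 * a ^ 8 / N ^ 8) (1024 / 3 * a ^ 10 / N ^ 10) (16384 * a ^ 12 / N ^ 12)).1
      (hq0c.mul (hLc.pow 2)).aestronglyMeasurable
      (Filter.Eventually.of_forall fun z => ?_)
    rw [Real.norm_eq_abs, abs_mul, abs_of_nonneg (hq0nn z), abs_of_nonneg (sq_nonneg _)]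
    have h := hLabs z
    have hQnn : (0:ℝ) ≤ a ^ 2 / N + 2 * a ^ 2 / N ^ 2 * z ^ 2
        + 4 * a ^ 4 / (3 * N ^ 4) * z ^ 4 + 128 * a ^ 6 / N ^ 6 * z ^ 6 :=
      (abs_nonneg _).trans h
    have hsq : llr N a z ^ 2 ≤ (a ^ 2 / N + 2 * a ^ 2 / N ^ 2 * z ^ 2
        + 4 * a ^ 4 / (3 * N ^ 4) * z ^ 4 + 128 * a ^ 6 / N ^ 6 * z ^ 6) ^ 2 := by
      rw [← sq_abs]
      exact pow_le_pow_left₀ (abs_nonneg _) h 2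
    have h2 := mul_le_mul_of_nonneg_left hsq (hq0nn z)
    calc q0 N z * llr N a z ^ 2 ≤ _ := h2
      _ = q0 N z * (a ^ 4 / N ^ 2 + 4 * a ^ 4 / N ^ 3 * z ^ 2
          + (8 / 3 * a ^ 6 / N ^ 5 + 4 * a ^ 4 / N ^ 4) * z ^ 4
          + (256 * a ^ 8 / N ^ 7 + 16 / 3 * a ^ 6 / N ^ 6) * z ^ 6
          + 4624 / 9 * a ^ 8 / N ^ 8 * z ^ 8 + 1024 / 3 * a ^ 10 / N ^ 10 * z ^ 10
          + 16384 * a ^ 12 / N ^ 12 * z ^ 12) := by ring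
  have hiP2 : Integrable (fun z : ℝ => q0 N z * P z ^ 2) := by
    have h := (int_poly N hN (a ^ 4 / N ^ 2) (-(4 * a ^ 4 / N ^ 3))
      (8 / 3 * a ^ 6 / N ^ 5 + 4 * a ^ 4 / N ^ 4) (-(16 / 3 * a ^ 6 / N ^ 6))
      (16 / 9 * a ^ 8 / N ^ 8) 0 0).1
    have heq : (fun z : ℝ => q0 N z * P z ^ 2)
        = fun z : ℝ => q0 N z * (a ^ 4 / N ^ 2 + -(4 * a ^ 4 / N ^ 3) * z ^ 2
          + (8 / 3 * a ^ 6 / N ^ 5 + 4 * a ^ 4 / N ^ 4) * z ^ 4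
          + -(16 / 3 * a ^ 6 / N ^ 6) * z ^ 6 + 16 / 9 * a ^ 8 / N ^ 8 * z ^ 8
          + 0 * z ^ 10 + 0 * z ^ 12) := by
      funext z; rw [hP_def]; ring
    rw [heq]; exact h
  -- exact values
  have hIP : (∫ z : ℝ, q0 N z * P z) = -(a ^ 4 / N ^ 2) := by
    have h := (int_poly N hN (-a ^ 2 / N) (2 * a ^ 2 / N ^ 2) (-(4 * a ^ 4 / (3 * N ^ 4)))
      0 0 0 0).2
    have heq : (fun z : ℝ => q0 N z * P z)
        = fun z : ℝ => q0 N z * (-a ^ 2 / N + 2 * a ^ 2 / N ^ 2 * z ^ 2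
          + -(4 * a ^ 4 / (3 * N ^ 4)) * z ^ 4 + 0 * z ^ 6 + 0 * z ^ 8 + 0 * z ^ 10
          + 0 * z ^ 12) := by
      funext z; rw [hP_def]; ring
    rw [heq, h]
    field_simp
    ring
  have hIPP : (∫ z : ℝ, q0 N z * P z ^ 2)
      = 2 * a ^ 4 / N ^ 2 - 8 * a ^ 6 / N ^ 3 + 35 / 3 * a ^ 8 / N ^ 4 := by
    have h := (int_poly N hN (a ^ 4 / N ^ 2) (-(4 * a ^ 4 / N ^ 3))
      (8 / 3 * a ^ 6 / N ^ 5 + 4 * a ^ 4 / N ^ 4) (-(16 / 3 * a ^ 6 / N ^ 6))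
      (16 / 9 * a ^ 8 / N ^ 8) 0 0).2
    have heq : (fun z : ℝ => q0 N z * P z ^ 2)
        = fun z : ℝ => q0 N z * (a ^ 4 / N ^ 2 + -(4 * a ^ 4 / N ^ 3) * z ^ 2
          + (8 / 3 * a ^ 6 / N ^ 5 + 4 * a ^ 4 / N ^ 4) * z ^ 4
          + -(16 / 3 * a ^ 6 / N ^ 6) * z ^ 6 + 16 / 9 * a ^ 8 / N ^ 8 * z ^ 8
          + 0 * z ^ 10 + 0 * z ^ 12) := by
      funext z; rw [hP_def]; ring
    rw [heq, h]
    field_simp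
    ring
  -- error bound 1
  have hE1 : |(∫ z : ℝ, q0 N z * llr N a z) - -(a ^ 4 / N ^ 2)| ≤ 240 / N ^ 3 * a ^ 6 := by
    rw [← hIP, ← integral_sub hiL hiP]
    have hval := (int_poly N hN 0 0 0 (128 * a ^ 6 / N ^ 6) 0 0 0).2
    have hbound : ∀ z : ℝ, ‖q0 N z * llr N a z - q0 N z * P z‖
        ≤ q0 N z * (0 + 0 * z ^ 2 + 0 * z ^ 4 + 128 * a ^ 6 / N ^ 6 * z ^ 6 + 0 * z ^ 8
          + 0 * z ^ 10 + 0 * z ^ 12) := by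
      intro z
      have heq : q0 N z * llr N a z - q0 N z * P z = q0 N z * (llr N a z - P z) := by ring
      rw [Real.norm_eq_abs, heq, abs_mul, abs_of_nonneg (hq0nn z)]
      have h2 := mul_le_mul_of_nonneg_left (hR z) (hq0nn z)
      calc q0 N z * |llr N a z - P z| ≤ q0 N z * (128 * a ^ 6 / N ^ 6 * z ^ 6) := h2
        _ = _ := by ring
    have h := norm_integral_le_of_norm_le (int_poly N hN 0 0 0 (128 * a ^ 6 / N ^ 6) 0 0 0).1
      (Filter.Eventually.of_forall hbound)
    rw [Real.norm_eq_abs] at h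
    calc |∫ z : ℝ, (q0 N z * llr N a z - q0 N z * P z)| ≤ _ := h
      _ = 240 / N ^ 3 * a ^ 6 := by rw [hval]; field_simp; ring
  -- error bound 2
  have hE2 : |(∫ z : ℝ, q0 N z * llr N a z ^ 2) - ∫ z : ℝ, q0 N z * P z ^ 2|
      ≤ (3840 / N ^ 4 + 10080 / N ^ 5 + 2661120 / N ^ 6) * a ^ 6 := by
    rw [← integral_sub hiL2 hiP2]
    have hval := (int_poly N hN 0 0 0 (256 * a ^ 8 / N ^ 7) (512 * a ^ 8 / N ^ 8)
      (1024 / 3 * a ^ 10 / N ^ 10) (16384 * a ^ 12 / N ^ 12)).2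
    have hbound : ∀ z : ℝ, ‖q0 N z * llr N a z ^ 2 - q0 N z * P z ^ 2‖
        ≤ q0 N z * (0 + 0 * z ^ 2 + 0 * z ^ 4 + 256 * a ^ 8 / N ^ 7 * z ^ 6
          + 512 * a ^ 8 / N ^ 8 * z ^ 8 + 1024 / 3 * a ^ 10 / N ^ 10 * z ^ 10
          + 16384 * a ^ 12 / N ^ 12 * z ^ 12) := by
      intro z
      have heq : q0 N z * llr N a z ^ 2 - q0 N z * P z ^ 2
          = q0 N z * (llr N a z ^ 2 - P z ^ 2) := by ring
      rw [Real.norm_eq_abs, heq, abs_mul, abs_of_nonneg (hq0nn z)]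
      have hfac : |llr N a z ^ 2 - P z ^ 2| = |llr N a z - P z| * |llr N a z + P z| := by
        rw [← abs_mul]; congr 1; ring
      have hsum : |llr N a z + P z| ≤ 128 * a ^ 6 / N ^ 6 * z ^ 6
          + 2 * (a ^ 2 / N + 2 * a ^ 2 / N ^ 2 * z ^ 2 + 4 * a ^ 4 / (3 * N ^ 4) * z ^ 4) := by
        calc |llr N a z + P z| = |(llr N a z - P z) + 2 * P z| := by ring_nf
          _ ≤ |llr N a z - P z| + |2 * P z| := abs_add_le _ _
          _ ≤ _ := by
              rw [abs_mul, abs_two]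
              have := hR z; have := hPabs z; linarith
      have hprod : |llr N a z ^ 2 - P z ^ 2|
          ≤ (128 * a ^ 6 / N ^ 6 * z ^ 6) * (128 * a ^ 6 / N ^ 6 * z ^ 6
            + 2 * (a ^ 2 / N + 2 * a ^ 2 / N ^ 2 * z ^ 2 + 4 * a ^ 4 / (3 * N ^ 4) * z ^ 4)) := by
        rw [hfac]
        exact mul_le_mul (hR z) hsum (abs_nonneg _)
          (by positivity)
      have h2 := mul_le_mul_of_nonneg_left hprod (hq0nn z)
      calc q0 N z * |llr N a z ^ 2 - P z ^ 2| ≤ _ := h2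
        _ = q0 N z * (0 + 0 * z ^ 2 + 0 * z ^ 4 + 256 * a ^ 8 / N ^ 7 * z ^ 6
            + 512 * a ^ 8 / N ^ 8 * z ^ 8 + 1024 / 3 * a ^ 10 / N ^ 10 * z ^ 10
            + 16384 * a ^ 12 / N ^ 12 * z ^ 12) := by ring
    have h := norm_integral_le_of_norm_le (int_poly N hN 0 0 0 (256 * a ^ 8 / N ^ 7)
      (512 * a ^ 8 / N ^ 8) (1024 / 3 * a ^ 10 / N ^ 10) (16384 * a ^ 12 / N ^ 12)).1
      (Filter.Eventually.of_forall hbound)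
    rw [Real.norm_eq_abs] at h
    have ha8 : a ^ 8 ≤ a ^ 6 := pow_le_pow_of_le_one ha0.le ha1 (by norm_num)
    have ha10 : a ^ 10 ≤ a ^ 6 := pow_le_pow_of_le_one ha0.le ha1 (by norm_num)
    have ha12 : a ^ 12 ≤ a ^ 6 := pow_le_pow_of_le_one ha0.le ha1 (by norm_num)
    calc |∫ z : ℝ, (q0 N z * llr N a z ^ 2 - q0 N z * P z ^ 2)| ≤ _ := h
      _ = 3840 * a ^ 8 / N ^ 4 + 10080 * a ^ 10 / N ^ 5 + 2661120 * a ^ 12 / N ^ 6 := by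
          rw [hval]; field_simp; ring
      _ ≤ (3840 / N ^ 4 + 10080 / N ^ 5 + 2661120 / N ^ 6) * a ^ 6 := by
          have h1 : 3840 * a ^ 8 / N ^ 4 ≤ 3840 * a ^ 6 / N ^ 4 := by gcongr
          have h2 : 10080 * a ^ 10 / N ^ 5 ≤ 10080 * a ^ 6 / N ^ 5 := by gcongr
          have h3 : 2661120 * a ^ 12 / N ^ 6 ≤ 2661120 * a ^ 6 / N ^ 6 := by gcongr
          calc 3840 * a ^ 8 / N ^ 4 + 10080 * a ^ 10 / N ^ 5 + 2661120 * a ^ 12 / N ^ 6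
              ≤ 3840 * a ^ 6 / N ^ 4 + 10080 * a ^ 6 / N ^ 5 + 2661120 * a ^ 6 / N ^ 6 := by
                linarith
            _ = (3840 / N ^ 4 + 10080 / N ^ 5 + 2661120 / N ^ 6) * a ^ 6 := by ring
  -- square of the first integral
  have hI1sq : (∫ z : ℝ, q0 N z * llr N a z) ^ 2
      ≤ (1 / N ^ 2 + 240 / N ^ 3) ^ 2 * a ^ 6 := by
    have ha6 : a ^ 6 ≤ a ^ 4 := pow_le_pow_of_le_one ha0.le ha1 (by norm_num)
    have habs : |∫ z : ℝ, q0 N z * llr N a z| ≤ (1 / N ^ 2 + 240 / N ^ 3) * a ^ 4 := by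
      rw [abs_le] at hE1 ⊢
      have hc : (0:ℝ) ≤ 240 / N ^ 3 := by positivity
      have hd : (0:ℝ) ≤ a ^ 4 - a ^ 6 := sub_nonneg.mpr ha6
      constructor
      · rw [← sub_nonneg]
        have e : (∫ z : ℝ, q0 N z * llr N a z) - -((1 / N ^ 2 + 240 / N ^ 3) * a ^ 4)
            = ((∫ z : ℝ, q0 N z * llr N a z) - -(a ^ 4 / N ^ 2) - -(240 / N ^ 3 * a ^ 6))
              + 240 / N ^ 3 * (a ^ 4 - a ^ 6) := by ring
        rw [e]
        exact add_nonneg (by linarith [hE1.1, sub_nonneg.mpr hE1.1]) (mul_nonneg hc hd)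
      · rw [← sub_nonneg]
        have e : (1 / N ^ 2 + 240 / N ^ 3) * a ^ 4 - (∫ z : ℝ, q0 N z * llr N a z)
            = (240 / N ^ 3 * a ^ 6 - ((∫ z : ℝ, q0 N z * llr N a z) - -(a ^ 4 / N ^ 2)))
              + 240 / N ^ 3 * (a ^ 4 - a ^ 6) + 2 / N ^ 2 * a ^ 4 := by ring
        rw [e]
        exact add_nonneg (add_nonneg (sub_nonneg.mpr hE1.2) (mul_nonneg hc hd)) (by positivity)
    have h1 : (∫ z : ℝ, q0 N z * llr N a z) ^ 2 ≤ ((1 / N ^ 2 + 240 / N ^ 3) * a ^ 4) ^ 2 := by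
      rw [← sq_abs]
      exact pow_le_pow_left₀ (abs_nonneg _) habs 2
    have ha8 : a ^ 8 ≤ a ^ 6 := pow_le_pow_of_le_one ha0.le ha1 (by norm_num)
    calc (∫ z : ℝ, q0 N z * llr N a z) ^ 2 ≤ ((1 / N ^ 2 + 240 / N ^ 3) * a ^ 4) ^ 2 := h1
      _ = (1 / N ^ 2 + 240 / N ^ 3) ^ 2 * a ^ 8 := by ring
      _ ≤ (1 / N ^ 2 + 240 / N ^ 3) ^ 2 * a ^ 6 := by gcongr
  -- final assembly
  have ha8 : a ^ 8 ≤ a ^ 6 := pow_le_pow_of_le_one ha0.le ha1 (by norm_num)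
  have hIPPd : |(∫ z : ℝ, q0 N z * P z ^ 2) - 2 * a ^ 4 / N ^ 2|
      ≤ (8 / N ^ 3 + 35 / (3 * N ^ 4)) * a ^ 6 := by
    rw [hIPP, abs_le]
    have h35 : 35 / 3 * a ^ 8 / N ^ 4 ≤ 35 / 3 * a ^ 6 / N ^ 4 := by gcongr
    have hp1 : (0:ℝ) ≤ 35 / 3 * a ^ 8 / N ^ 4 := by positivity
    have hp2 : (0:ℝ) ≤ 8 * a ^ 6 / N ^ 3 := by positivity
    have hp3 : (0:ℝ) ≤ 35 / (3 * N ^ 4) * a ^ 6 := by positivity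
    have hp4 : (0:ℝ) ≤ 8 / N ^ 3 * a ^ 6 := by positivity
    have h8 : 8 * a ^ 6 / N ^ 3 = 8 / N ^ 3 * a ^ 6 := by ring
    have h35' : 35 / 3 * a ^ 6 / N ^ 4 = 35 / (3 * N ^ 4) * a ^ 6 := by ring
    constructor <;> nlinarith [h35, hp1, hp2, hp3, hp4]
  have hnn : (0:ℝ) ≤ (∫ z : ℝ, q0 N z * llr N a z) ^ 2 := sq_nonneg _
  rw [abs_le] at hE2 hIPPd ⊢
  constructor <;> nlinarith [hI1sq, hE2.1, hE2.2, hIPPd.1, hIPPd.2, hnn]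
end

section
/- Let N_w > 0 and let ν₁, ν₂ > 0 be constants such that for every n ≥ 1 and every nonempty finite 𝒞 ⊆ ℝⁿ, V(q̂, q₀^{⊗n}) ≥ 1 − 2·Q(P_min/(√(2n)·N_w)) − P_min²/(√π·N_w²·n^{3/2}) − (ν₁+ν₂)/√n, where P_min = min_{x∈𝒞}‖x‖₂², q̂(z) = (1/|𝒞|)·∑_{x∈𝒞}∏_{i=1}^n (πN_w)^{−1/2}·exp(−(zᵢ−xᵢ)²/N_w), and q₀^{⊗n}(z) = ∏_{i=1}^n (πN_w)^{−1/2}·exp(−zᵢ²/N_w). Let δ ∈ (0,1), γ ∈ [0,1], ν > 0, n ≥ 1 be such that θ := (1−δ)/2 − 2ν²/(√(πn)·N_w²) − γ lies in (0, 1/2), and set A = √2·N_w·t_θ where t_θ > 0 satisfies Q(t_θ) = θ, and assume 4ν² ≥ A² + √π·N_w²·(ν₁+ν₂). Then every nonempty finite set 𝒞 ⊆ ℝⁿ with V(q̂, q₀^{⊗n}) ≤ δ contains a low-power subset of proportional size: |{x ∈ 𝒞 : ‖x‖₂² ≤ A·√n}| ≥ γ·|𝒞|. -/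
set_option maxHeartbeats 1000000

open MeasureTheory

/-- The standard normal tail function `Q(λ) = ∫_λ^∞ (2π)^{-1/2} e^{-u²/2} du`. -/
noncomputable def gaussQ (l : ℝ) : ℝ :=
  ∫ u in Set.Ioi l, (Real.sqrt (2 * Real.pi))⁻¹ * Real.exp (-u ^ 2 / 2)

/-! ### Auxiliary one-dimensional Gaussian facts -/

lemma qa_nonneg (N a z : ℝ) : 0 ≤ qa N a z :=
  mul_nonneg (inv_nonneg.2 (Real.sqrt_nonneg _)) (Real.exp_nonneg _)

lemma integrable_qa {N : ℝ} (hN : 0 < N) (a : ℝ) : Integrable (qa N a) := by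
  unfold qa
  refine Integrable.const_mul ?_ _
  have h : Integrable (fun z : ℝ => Real.exp (-(1/N) * z ^ 2)) :=
    integrable_exp_neg_mul_sq (by positivity)
  exact (h.comp_sub_right a).congr (by filter_upwards with z; ring_nf)

lemma integral_qa {N : ℝ} (hN : 0 < N) (a : ℝ) : ∫ z, qa N a z = 1 := by
  unfold qa
  rw [integral_const_mul]
  have h1 : (fun z : ℝ => Real.exp (-(z - a) ^ 2 / N))
      = fun z => (fun t => Real.exp (-(1/N) * t ^ 2)) (z - a) := by
    funext z; ring_nf
  rw [h1, integral_sub_right_eq_self (fun t => Real.exp (-(1/N) * t ^ 2)) a, integral_gaussian]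
  rw [show Real.pi / (1/N) = Real.pi * N by field_simp]
  rw [inv_mul_cancel₀]
  positivity

lemma kernel_pointwise {N c : ℝ} (hN : 0 < N) (hc0 : 0 < c) (hc1 : c < 1) (x z u : ℝ) :
    qa N x u * q0 ((1 - c^2) * N) (z - c * u)
      = qa N (c * x) z * qa ((1 - c^2) * N) ((1 - c^2) * x + c * z) u := by
  have hb : (0:ℝ) < 1 - c^2 := by nlinarith
  unfold qa q0
  have hexp : -(u - x) ^ 2 / N + -(z - c*u) ^ 2 / ((1 - c^2) * N)
      = -(z - c*x) ^ 2 / N + -(u - ((1 - c^2) * x + c * z)) ^ 2 / ((1 - c^2) * N) := by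
    field_simp
    ring
  calc (Real.sqrt (Real.pi * N))⁻¹ * Real.exp (-(u - x) ^ 2 / N) *
        ((Real.sqrt (Real.pi * ((1 - c^2) * N)))⁻¹ *
          Real.exp (-(z - c*u) ^ 2 / ((1 - c^2) * N)))
      = (Real.sqrt (Real.pi * N))⁻¹ * (Real.sqrt (Real.pi * ((1 - c^2) * N)))⁻¹ *
        Real.exp (-(u - x) ^ 2 / N + -(z - c*u) ^ 2 / ((1 - c^2) * N)) := by
        rw [Real.exp_add]; ring
    _ = (Real.sqrt (Real.pi * N))⁻¹ * (Real.sqrt (Real.pi * ((1 - c^2) * N)))⁻¹ *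
        Real.exp (-(z - c*x) ^ 2 / N + -(u - ((1 - c^2) * x + c * z)) ^ 2 / ((1 - c^2) * N)) := by
        rw [hexp]
    _ = _ := by rw [Real.exp_add]; ring

lemma kernel_int1 {N c : ℝ} (hN : 0 < N) (hc0 : 0 < c) (hc1 : c < 1) (x z : ℝ) :
    ∫ u, qa N x u * q0 ((1 - c^2) * N) (z - c * u) = qa N (c * x) z := by
  have hb : (0:ℝ) < (1 - c^2) * N := by
    have : (0:ℝ) < 1 - c^2 := by nlinarith
    positivity
  have h1 : (fun u => qa N x u * q0 ((1 - c^2) * N) (z - c * u))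
      = fun u => qa N (c * x) z * qa ((1 - c^2) * N) ((1 - c^2) * x + c * z) u := by
    funext u; exact kernel_pointwise hN hc0 hc1 x z u
  rw [h1, integral_const_mul, integral_qa hb, mul_one]

lemma kernel_integrable1 {N c : ℝ} (hN : 0 < N) (hc0 : 0 < c) (hc1 : c < 1) (x z : ℝ) :
    Integrable (fun u => qa N x u * q0 ((1 - c^2) * N) (z - c * u)) := by
  have hb : (0:ℝ) < (1 - c^2) * N := by
    have : (0:ℝ) < 1 - c^2 := by nlinarith
    positivity
  have h1 : (fun u => qa N x u * q0 ((1 - c^2) * N) (z - c * u))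
      = fun u => qa N (c * x) z * qa ((1 - c^2) * N) ((1 - c^2) * x + c * z) u := by
    funext u; exact kernel_pointwise hN hc0 hc1 x z u
  rw [h1]
  exact (integrable_qa hb _).const_mul _

/-! ### Product Gaussian densities on `Fin n → ℝ` -/

/-- Product Gaussian density with per-coordinate means `a`. -/
noncomputable def gp {n : ℕ} (M : ℝ) (a z : Fin n → ℝ) : ℝ := ∏ i, qa M (a i) (z i)

lemma gp_def' {n : ℕ} (M : ℝ) (a z : Fin n → ℝ) :
    (∏ i, qa M (a i) (z i)) = gp M a z := rfl

lemma prod_q0_eq {n : ℕ} (N : ℝ) (z : Fin n → ℝ) :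
    (∏ i, q0 N (z i)) = gp N 0 z := by
  unfold gp q0 qa
  exact Finset.prod_congr rfl fun i _ => by simp

variable {n : ℕ}

lemma gp_nonneg (M : ℝ) (a z : Fin n → ℝ) : 0 ≤ gp M a z :=
  Finset.prod_nonneg fun i _ => qa_nonneg _ _ _

lemma integrable_gp {M : ℝ} (hM : 0 < M) (a : Fin n → ℝ) :
    Integrable (gp M a) := by
  have := Integrable.fintype_prod (f := fun (i : Fin n) t => qa M (a i) t)
    (fun i => integrable_qa hM (a i))
  exact this

lemma integral_gp {M : ℝ} (hM : 0 < M) (a : Fin n → ℝ) : ∫ z, gp M a z = 1 := by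
  have := integral_fintype_prod_volume_eq_prod (ι := Fin n) (fun i t => qa M (a i) t)
  simpa [gp, integral_qa hM] using this

lemma kernel_intn {N c : ℝ} (hN : 0 < N) (hc0 : 0 < c) (hc1 : c < 1) (x z : Fin n → ℝ) :
    ∫ u : Fin n → ℝ, gp N x u * gp ((1 - c^2) * N) (fun i => c * u i) z
      = gp N (fun i => c * x i) z := by
  have h1 : (fun u : Fin n → ℝ => gp N x u * gp ((1 - c^2) * N) (fun i => c * u i) z)
      = fun u => ∏ i, (fun t => qa N (x i) t * q0 ((1 - c^2) * N) (z i - c * t)) (u i) := by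
    funext u
    simp only [gp, ← Finset.prod_mul_distrib]
    exact Finset.prod_congr rfl fun i _ => by simp [qa, q0]
  rw [h1, integral_fintype_prod_volume_eq_prod (ι := Fin n)
    (fun i t => qa N (x i) t * q0 ((1 - c^2) * N) (z i - c * t))]
  unfold gp
  exact Finset.prod_congr rfl fun i _ => kernel_int1 hN hc0 hc1 (x i) (z i)

lemma kernel_integrablen {N c : ℝ} (hN : 0 < N) (hc0 : 0 < c) (hc1 : c < 1) (x z : Fin n → ℝ) :
    Integrable (fun u : Fin n → ℝ => gp N x u * gp ((1 - c^2) * N) (fun i => c * u i) z) := by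
  have h1 : (fun u : Fin n → ℝ => gp N x u * gp ((1 - c^2) * N) (fun i => c * u i) z)
      = fun u => ∏ i, (fun t => qa N (x i) t * q0 ((1 - c^2) * N) (z i - c * t)) (u i) := by
    funext u
    simp only [gp, ← Finset.prod_mul_distrib]
    exact Finset.prod_congr rfl fun i _ => by simp [qa, q0]
  rw [h1]
  exact Integrable.fintype_prod (f := fun i t => qa N (x i) t * q0 ((1 - c^2) * N) (z i - c * t))
    (fun i => kernel_integrable1 hN hc0 hc1 (x i) (z i))

/-! ### Smoothing (data processing) inequality for the total variation integral -/

/-- The signed density of the (unnormalized) code mixture minus `k` times noise. -/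
noncomputable def fsig {n : ℕ} (N : ℝ) (C2 : Finset (Fin n → ℝ)) (k : ℝ) (u : Fin n → ℝ) : ℝ :=
  (∑ x ∈ C2, gp N x u) - k * gp N 0 u

lemma integrable_fsig {N : ℝ} (hN : 0 < N) (C2 : Finset (Fin n → ℝ)) (k : ℝ) :
    Integrable (fsig N C2 k) := by
  unfold fsig
  exact (integrable_finset_sum _ (fun x _ => integrable_gp hN x)).sub
    ((integrable_gp hN 0).const_mul k)

lemma continuous_qa1 (N a : ℝ) : Continuous (qa N a) := by
  unfold qa; fun_prop

lemma continuous_fsig {N : ℝ} (C2 : Finset (Fin n → ℝ)) (k : ℝ) :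
    Continuous (fsig N C2 k) := by
  unfold fsig gp qa
  fun_prop

lemma fsig_smooth {N c : ℝ} (hN : 0 < N) (hc0 : 0 < c) (hc1 : c < 1)
    (C2 : Finset (Fin n → ℝ)) (k : ℝ) (z : Fin n → ℝ) :
    ∫ u, fsig N C2 k u * gp ((1 - c^2) * N) (fun i => c * u i) z
      = (∑ x ∈ C2, gp N (fun i => c * x i) z) - k * gp N 0 z := by
  have hfun : ∀ u : Fin n → ℝ, fsig N C2 k u * gp ((1 - c^2) * N) (fun i => c * u i) z
      = (∑ x ∈ C2, gp N x u * gp ((1 - c^2) * N) (fun i => c * u i) z)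
        - k * (gp N 0 u * gp ((1 - c^2) * N) (fun i => c * u i) z) := by
    intro u
    generalize gp ((1 - c^2) * N) (fun i => c * u i) z = K
    unfold fsig
    rw [sub_mul, Finset.sum_mul, mul_assoc]
  simp only [hfun]
  have h0 : (fun i : Fin n => c * (0 : Fin n → ℝ) i) = (0 : Fin n → ℝ) := by
    funext i; simp
  rw [integral_sub (integrable_finset_sum _ (fun x _ => kernel_integrablen hN hc0 hc1 x z))
      ((kernel_integrablen hN hc0 hc1 (0 : Fin n → ℝ) z).const_mul k)]
  rw [integral_finset_sum _ (fun x _ => kernel_integrablen hN hc0 hc1 x z)]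
  rw [integral_const_mul, kernel_intn hN hc0 hc1, h0]
  congr 1
  exact Finset.sum_congr rfl fun x _ => kernel_intn hN hc0 hc1 x z

lemma tv_contraction {N c : ℝ} (hN : 0 < N) (hc0 : 0 < c) (hc1 : c < 1)
    (C2 : Finset (Fin n → ℝ)) (k : ℝ) :
    ∫ z, |(∑ x ∈ C2, gp N (fun i => c * x i) z) - k * gp N 0 z|
      ≤ ∫ u, |fsig N C2 k u| := by
  have hb : (0:ℝ) < 1 - c^2 := by nlinarith
  have hM : (0:ℝ) < (1 - c^2) * N := by positivity
  set F : (Fin n → ℝ) × (Fin n → ℝ) → ℝ :=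
    fun p => |fsig N C2 k p.2| * gp ((1 - c^2) * N) (fun i => c * p.2 i) p.1 with hF
  have hFcont : Continuous F := by
    rw [hF]
    unfold fsig gp qa
    fun_prop
  have hFz : ∀ u : Fin n → ℝ, ∫ z, F (z, u) = |fsig N C2 k u| := by
    intro u
    simp only [hF]
    rw [integral_const_mul, integral_gp hM, mul_one]
  have hFint : Integrable F ((volume : Measure (Fin n → ℝ)).prod volume) := by
    rw [integrable_prod_iff' hFcont.aestronglyMeasurable]
    constructor
    · filter_upwards with u
      simp only [hF]
      exact (integrable_gp hM _).const_mul _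
    · have : (fun u : Fin n → ℝ => ∫ z, ‖F (z, u)‖) = fun u => |fsig N C2 k u| := by
        funext u
        rw [← hFz u]
        congr 1
        funext z
        rw [Real.norm_eq_abs, abs_of_nonneg]
        exact mul_nonneg (abs_nonneg _) (gp_nonneg _ _ _)
      rw [this]
      exact (integrable_fsig hN C2 k).abs
  have hrep : ∀ z, (∑ x ∈ C2, gp N (fun i => c * x i) z) - k * gp N 0 z
      = ∫ u, fsig N C2 k u * gp ((1 - c^2) * N) (fun i => c * u i) z :=
    fun z => (fsig_smooth hN hc0 hc1 C2 k z).symm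
  calc ∫ z, |(∑ x ∈ C2, gp N (fun i => c * x i) z) - k * gp N 0 z|
      ≤ ∫ z, ∫ u, F (z, u) := by
        apply integral_mono_of_nonneg (ae_of_all _ fun z => abs_nonneg _)
          (hFint.integral_prod_left)
        filter_upwards with z
        rw [hrep z]
        calc |∫ u, fsig N C2 k u * gp ((1 - c^2) * N) (fun i => c * u i) z|
            ≤ ∫ u, ‖fsig N C2 k u * gp ((1 - c^2) * N) (fun i => c * u i) z‖ :=
              norm_integral_le_integral_norm
                (fun u => fsig N C2 k u * gp ((1 - c^2) * N) (fun i => c * u i) z)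
          _ = ∫ u, F (z, u) := by
              congr 1
              funext u
              simp only [hF, Real.norm_eq_abs, abs_mul]
              rw [abs_of_nonneg (gp_nonneg _ _ _)]
    _ = ∫ u, ∫ z, F (z, u) :=
        integral_integral_swap (f := fun z u => F (z, u)) hFint
    _ = ∫ u, |fsig N C2 k u| := by
        congr 1
        funext u
        exact hFz u

/-! ### Arithmetic estimate for the right-hand side of (14) at the scaled subcode -/

lemma arith_main (Nw ν₁ ν₂ δ γ ν tθ : ℝ) (n : ℕ) (hn : 1 ≤ n) (hNw : 0 < Nw)
    (hQθ : gaussQ tθ = (1 - δ) / 2 - 2 * ν ^ 2 / (Real.sqrt (Real.pi * n) * Nw ^ 2) - γ)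
    (hA : (Real.sqrt 2 * Nw * tθ) ^ 2 + Real.sqrt Real.pi * Nw ^ 2 * (ν₁ + ν₂) ≤ 4 * ν ^ 2) :
    δ + 2 * γ ≤ 1 - 2 * gaussQ ((Real.sqrt 2 * Nw * tθ * Real.sqrt n) / (Real.sqrt (2 * n) * Nw))
      - (Real.sqrt 2 * Nw * tθ * Real.sqrt n) ^ 2
          / (Real.sqrt Real.pi * Nw ^ 2 * (n : ℝ) ^ ((3 : ℝ) / 2))
      - (ν₁ + ν₂) / Real.sqrt n := by
  have hn0 : (0:ℝ) < n := by exact_mod_cast hn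
  have hsn : 0 < Real.sqrt n := Real.sqrt_pos.2 hn0
  have hs2 : 0 < Real.sqrt 2 := Real.sqrt_pos.2 (by norm_num)
  have hsπ : 0 < Real.sqrt Real.pi := Real.sqrt_pos.2 Real.pi_pos
  have harg : (Real.sqrt 2 * Nw * tθ * Real.sqrt n) / (Real.sqrt (2 * n) * Nw) = tθ := by
    rw [Real.sqrt_mul (by norm_num : (0:ℝ) ≤ 2)]
    field_simp
  have h2' : (Real.sqrt 2) ^ 2 = 2 := Real.sq_sqrt (by norm_num)
  have hn2' : (Real.sqrt (n:ℝ)) ^ 2 = (n:ℝ) := Real.sq_sqrt hn0.le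
  have hsq : (Real.sqrt 2 * Nw * tθ * Real.sqrt n) ^ 2 = 2 * Nw ^ 2 * tθ ^ 2 * n := by
    have : (Real.sqrt 2 * Nw * tθ * Real.sqrt n) ^ 2
        = (Real.sqrt 2) ^ 2 * Nw ^ 2 * tθ ^ 2 * (Real.sqrt (n:ℝ)) ^ 2 := by ring
    rw [this, h2', hn2']
  have hpow : (n : ℝ) ^ ((3 : ℝ) / 2) = n * Real.sqrt n := by
    rw [show (3:ℝ)/2 = 1 + 1/2 by norm_num, Real.rpow_add hn0, Real.rpow_one,
      ← Real.sqrt_eq_rpow]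
  have hπn : Real.sqrt (Real.pi * n) = Real.sqrt Real.pi * Real.sqrt n :=
    Real.sqrt_mul Real.pi_pos.le n
  rw [harg, hsq, hpow, hQθ, hπn]
  have e1 : 2 * Nw ^ 2 * tθ ^ 2 * n / (Real.sqrt Real.pi * Nw ^ 2 * (n * Real.sqrt n))
      = 2 * Nw ^ 2 * tθ ^ 2 / (Real.sqrt Real.pi * Nw ^ 2 * Real.sqrt n) := by
    rw [div_eq_div_iff (by positivity) (by positivity)]
    ring
  have e2 : (ν₁ + ν₂) / Real.sqrt n
      = Real.sqrt Real.pi * Nw ^ 2 * (ν₁ + ν₂) / (Real.sqrt Real.pi * Nw ^ 2 * Real.sqrt n) := by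
    rw [div_eq_div_iff (by positivity) (by positivity)]
    ring
  have e3 : 2 * ν ^ 2 / (Real.sqrt Real.pi * Real.sqrt n * Nw ^ 2)
      = 2 * ν ^ 2 / (Real.sqrt Real.pi * Nw ^ 2 * Real.sqrt n) := by ring_nf
  have hD : 0 < Real.sqrt Real.pi * Nw ^ 2 * Real.sqrt n := by positivity
  have key : 2 * Nw ^ 2 * tθ ^ 2 / (Real.sqrt Real.pi * Nw ^ 2 * Real.sqrt n)
      + Real.sqrt Real.pi * Nw ^ 2 * (ν₁ + ν₂) / (Real.sqrt Real.pi * Nw ^ 2 * Real.sqrt n)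
      ≤ 4 * ν ^ 2 / (Real.sqrt Real.pi * Nw ^ 2 * Real.sqrt n) := by
    rw [← add_div, div_le_div_iff_of_pos_right hD]
    have hsq2 : (Real.sqrt 2 * Nw * tθ) ^ 2 = 2 * Nw ^ 2 * tθ ^ 2 := by
      have : (Real.sqrt 2 * Nw * tθ) ^ 2 = (Real.sqrt 2) ^ 2 * Nw ^ 2 * tθ ^ 2 := by ring
      rw [this, h2']
    linarith [hA, hsq2.symm.trans_le (le_refl _)]
  rw [e1, e2, e3]
  have h4 : 4 * ν ^ 2 / (Real.sqrt Real.pi * Nw ^ 2 * Real.sqrt n)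
      = 2 * (2 * ν ^ 2 / (Real.sqrt Real.pi * Nw ^ 2 * Real.sqrt n)) := by ring
  linarith [key]

/-- Any code whose induced output density is within variational distance `δ` of the all-noise
density contains a proportion at least `γ` of "low-power" codewords of power at most `A √n`. -/
theorem low_power_subcode (Nw : ℝ) (hNw : 0 < Nw) (ν₁ ν₂ : ℝ) (hν₁ : 0 < ν₁) (hν₂ : 0 < ν₂)
    (h14 : ∀ (n : ℕ), 1 ≤ n → ∀ (𝒞 : Finset (Fin n → ℝ)) (h𝒞 : 𝒞.Nonempty),
      1 - 2 * gaussQ ((𝒞.inf' h𝒞 fun x => ∑ i, (x i) ^ 2) / (Real.sqrt (2 * n) * Nw))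
        - (𝒞.inf' h𝒞 fun x => ∑ i, (x i) ^ 2) ^ 2 /
            (Real.sqrt Real.pi * Nw ^ 2 * (n : ℝ) ^ ((3 : ℝ) / 2))
        - (ν₁ + ν₂) / Real.sqrt n
      ≤ (1 / 2) * ∫ z : Fin n → ℝ,
          |((𝒞.card : ℝ))⁻¹ * (∑ x ∈ 𝒞, ∏ i, qa Nw (x i) (z i)) - ∏ i, q0 Nw (z i)|)
    (δ γ ν : ℝ) (n : ℕ) (hn : 1 ≤ n) (hδ : δ ∈ Set.Ioo (0 : ℝ) 1)
    (hγ : γ ∈ Set.Icc (0 : ℝ) 1) (hν : 0 < ν)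
    (hθ : (1 - δ) / 2 - 2 * ν ^ 2 / (Real.sqrt (Real.pi * n) * Nw ^ 2) - γ
            ∈ Set.Ioo (0 : ℝ) (1 / 2))
    (tθ : ℝ) (htθ : 0 < tθ)
    (hQθ : gaussQ tθ = (1 - δ) / 2 - 2 * ν ^ 2 / (Real.sqrt (Real.pi * n) * Nw ^ 2) - γ)
    (hA : (Real.sqrt 2 * Nw * tθ) ^ 2 + Real.sqrt Real.pi * Nw ^ 2 * (ν₁ + ν₂) ≤ 4 * ν ^ 2) :
    ∀ (𝒞 : Finset (Fin n → ℝ)), 𝒞.Nonempty →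
      (1 / 2) * (∫ z : Fin n → ℝ,
          |((𝒞.card : ℝ))⁻¹ * (∑ x ∈ 𝒞, ∏ i, qa Nw (x i) (z i)) - ∏ i, q0 Nw (z i)|) ≤ δ →
      γ * (𝒞.card : ℝ) ≤
        ((𝒞.filter fun x => ∑ i, (x i) ^ 2 ≤ Real.sqrt 2 * Nw * tθ * Real.sqrt n).card : ℝ) := by
  intro 𝒞 h𝒞 hV
  by_contra hcon
  push_neg at hcon
  -- basic positivity facts
  have hn0 : (0:ℝ) < n := by exact_mod_cast hn
  have hsn : 0 < Real.sqrt n := Real.sqrt_pos.2 hn0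
  have hthr_pos : (0:ℝ) < Real.sqrt 2 * Nw * tθ * Real.sqrt n := by
    have hs2 : (0:ℝ) < Real.sqrt 2 := Real.sqrt_pos.2 (by norm_num)
    positivity
  set thr : ℝ := Real.sqrt 2 * Nw * tθ * Real.sqrt n with hthr
  set C1 : Finset (Fin n → ℝ) := 𝒞.filter fun x => ∑ i, (x i) ^ 2 ≤ thr with hC1
  set C2 : Finset (Fin n → ℝ) := 𝒞.filter fun x => ¬ (∑ i, (x i) ^ 2 ≤ thr) with hC2
  have hcards : C1.card + C2.card = 𝒞.card :=
    Finset.card_filter_add_card_filter_not _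
  have hNtot_pos : 0 < 𝒞.card := Finset.card_pos.2 h𝒞
  have hγpos : 0 < γ := by
    rcases lt_or_ge 0 γ with h | h
    · exact h
    · exfalso
      have h1 : γ * (𝒞.card : ℝ) ≤ 0 :=
        mul_nonpos_of_nonpos_of_nonneg h (Nat.cast_nonneg _)
      have h2 : (0:ℝ) ≤ ((𝒞.filter fun x => ∑ i, (x i) ^ 2 ≤ thr).card : ℝ) :=
        Nat.cast_nonneg _
      linarith only [hcon, h1, h2]
  have hk_pos : 0 < C2.card := by
    by_contra hk
    push_neg at hk
    interval_cases h : C2.card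
    · have h1 : C1.card = 𝒞.card := by omega
      have h2 : γ * (𝒞.card : ℝ) ≤ (𝒞.card : ℝ) := by
        calc γ * (𝒞.card : ℝ) ≤ 1 * (𝒞.card : ℝ) :=
            mul_le_mul_of_nonneg_right hγ.2 (Nat.cast_nonneg _)
          _ = (𝒞.card : ℝ) := one_mul _
      have h3 : ((𝒞.filter fun x => ∑ i, (x i) ^ 2 ≤ thr).card : ℝ) = (𝒞.card : ℝ) := by
        rw [← hC1, h1]
      linarith only [hcon, h2, h3]
  have hC2ne : C2.Nonempty := Finset.card_pos.1 hk_pos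
  -- the minimum power of the complement subcode
  set P : ℝ := C2.inf' hC2ne (fun x => ∑ i, (x i) ^ 2) with hPdef
  obtain ⟨x₀, hx₀mem, hPx₀⟩ := C2.exists_mem_eq_inf' hC2ne (fun x => ∑ i, (x i) ^ 2)
  have hPgt : thr < P := by
    rw [hPdef, hPx₀]
    exact lt_of_not_ge (Finset.mem_filter.1 hx₀mem).2
  have hP0 : 0 < P := lt_trans hthr_pos hPgt
  -- the shrinking factor
  set c : ℝ := Real.sqrt (thr / P) with hcdef
  have hc2 : c ^ 2 = thr / P := Real.sq_sqrt (by positivity)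
  have hc0 : 0 < c := Real.sqrt_pos.2 (by positivity)
  have hc1 : c < 1 := by
    rw [hcdef, show (1:ℝ) = Real.sqrt 1 from Real.sqrt_one.symm]
    exact Real.sqrt_lt_sqrt (by positivity) ((div_lt_one hP0).2 hPgt)
  -- the scaled subcode
  have hinj : Function.Injective (fun x : Fin n → ℝ => c • x) :=
    smul_right_injective (Fin n → ℝ) hc0.ne'
  set 𝒟 : Finset (Fin n → ℝ) := C2.image (fun x => c • x) with h𝒟def
  have h𝒟ne : 𝒟.Nonempty := hC2ne.image _
  have hcard𝒟 : 𝒟.card = C2.card := Finset.card_image_of_injective _ hinj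
  have hpow_smul : ∀ x : Fin n → ℝ, (∑ i, ((c • x) i) ^ 2) = c ^ 2 * ∑ i, (x i) ^ 2 := by
    intro x
    rw [Finset.mul_sum]
    exact Finset.sum_congr rfl fun i _ => by
      simp [Pi.smul_apply, smul_eq_mul, mul_pow]
  have hinf𝒟 : 𝒟.inf' h𝒟ne (fun x => ∑ i, (x i) ^ 2) = thr := by
    rw [show 𝒟.inf' h𝒟ne (fun x => ∑ i, (x i) ^ 2)
        = C2.inf' h𝒟ne.of_image ((fun x : Fin n → ℝ => ∑ i, (x i) ^ 2) ∘ fun x => c • x)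
      from Finset.inf'_image h𝒟ne _]
    have hcomp : ((fun x : Fin n → ℝ => ∑ i, (x i) ^ 2) ∘ fun x => c • x)
        = fun x : Fin n → ℝ => c ^ 2 * ∑ i, (x i) ^ 2 := by
      funext x; exact hpow_smul x
    rw [hcomp]
    have hmin : C2.inf' hC2ne (fun x : Fin n → ℝ => c ^ 2 * ∑ i, (x i) ^ 2) = c ^ 2 * P := by
      apply le_antisymm
      · calc C2.inf' hC2ne (fun x : Fin n → ℝ => c ^ 2 * ∑ i, (x i) ^ 2)
            ≤ c ^ 2 * ∑ i, (x₀ i) ^ 2 := Finset.inf'_le _ hx₀mem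
          _ = c ^ 2 * P := by rw [hPdef, hPx₀]
      · apply Finset.le_inf'
        intro y hy
        have : P ≤ ∑ i, (y i) ^ 2 := by
          rw [hPdef]; exact Finset.inf'_le _ hy
        exact mul_le_mul_of_nonneg_left this (sq_nonneg c)
    rw [hmin, hc2, div_mul_cancel₀ _ hP0.ne']
  -- apply (14) to the scaled subcode
  have h14' := h14 n hn 𝒟 h𝒟ne
  rw [hinf𝒟] at h14'
  have hlow : δ + 2 * γ ≤ (1 / 2) * ∫ z : Fin n → ℝ,
      |((𝒟.card : ℝ))⁻¹ * (∑ x ∈ 𝒟, ∏ i, qa Nw (x i) (z i)) - ∏ i, q0 Nw (z i)| :=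
    le_trans (arith_main Nw ν₁ ν₂ δ γ ν tθ n hn hNw hQθ hA) h14'
  -- rewrite in terms of `gp`
  set k : ℝ := (C2.card : ℝ) with hkdef
  have hkR : 0 < k := by rw [hkdef]; exact_mod_cast hk_pos
  have hsum𝒟 : ∀ z : Fin n → ℝ,
      (∑ x ∈ 𝒟, ∏ i, qa Nw (x i) (z i)) = ∑ x ∈ C2, gp Nw (fun i => c * x i) z := by
    intro z
    rw [h𝒟def, Finset.sum_image (fun x _ y _ h => hinj h)]
    exact Finset.sum_congr rfl fun x _ => by
      simp only [gp_def']
      congr 1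
  have hintrw : ∀ z : Fin n → ℝ,
      |((𝒟.card : ℝ))⁻¹ * (∑ x ∈ 𝒟, ∏ i, qa Nw (x i) (z i)) - ∏ i, q0 Nw (z i)|
        = k⁻¹ * |(∑ x ∈ C2, gp Nw (fun i => c * x i) z) - k * gp Nw 0 z| := by
    intro z
    rw [hsum𝒟 z, prod_q0_eq, hcard𝒟, ← hkdef]
    rw [show k⁻¹ * (∑ x ∈ C2, gp Nw (fun i => c * x i) z) - gp Nw 0 z
        = k⁻¹ * ((∑ x ∈ C2, gp Nw (fun i => c * x i) z) - k * gp Nw 0 z) by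
      field_simp]
    rw [abs_mul, abs_of_pos (inv_pos.2 hkR)]
  have hlow2 : δ + 2 * γ ≤ (1 / 2) * (k⁻¹ *
      ∫ z, |(∑ x ∈ C2, gp Nw (fun i => c * x i) z) - k * gp Nw 0 z|) := by
    calc δ + 2 * γ ≤ (1 / 2) * ∫ z : Fin n → ℝ,
        |((𝒟.card : ℝ))⁻¹ * (∑ x ∈ 𝒟, ∏ i, qa Nw (x i) (z i)) - ∏ i, q0 Nw (z i)| := hlow
      _ = (1 / 2) * (k⁻¹ *
          ∫ z, |(∑ x ∈ C2, gp Nw (fun i => c * x i) z) - k * gp Nw 0 z|) := by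
        have hcongr : (∫ z : Fin n → ℝ,
            |((𝒟.card : ℝ))⁻¹ * (∑ x ∈ 𝒟, ∏ i, qa Nw (x i) (z i)) - ∏ i, q0 Nw (z i)|)
            = ∫ z, k⁻¹ * |(∑ x ∈ C2, gp Nw (fun i => c * x i) z) - k * gp Nw 0 z| :=
          integral_congr_ae (ae_of_all _ hintrw)
        rw [hcongr, integral_const_mul]
  -- contraction: the scaled subcode is closer to noise
  have hcontr := tv_contraction hNw hc0 hc1 C2 k
  -- bound the unscaled subcode TV by the full-code TV
  set Ntot : ℝ := (𝒞.card : ℝ) with hNtotdef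
  set N₁ : ℝ := (C1.card : ℝ) with hN₁def
  have hNtotR : 0 < Ntot := by rw [hNtotdef]; exact_mod_cast hNtot_pos
  have hNcast : Ntot = N₁ + k := by
    rw [hNtotdef, hN₁def, hkdef, ← hcards]
    push_cast
    ring
  have hsplit : ∀ u : Fin n → ℝ,
      (∑ x ∈ 𝒞, gp Nw x u) = (∑ x ∈ C1, gp Nw x u) + (∑ x ∈ C2, gp Nw x u) :=
    fun u => (Finset.sum_filter_add_sum_filter_not 𝒞 _ _).symm
  have hpoint : ∀ u : Fin n → ℝ, |fsig Nw C2 k u|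
      ≤ Ntot * |Ntot⁻¹ * (∑ x ∈ 𝒞, gp Nw x u) - gp Nw 0 u|
        + ((∑ x ∈ C1, gp Nw x u) + N₁ * gp Nw 0 u) := by
    intro u
    have e : fsig Nw C2 k u
        = Ntot * (Ntot⁻¹ * (∑ x ∈ 𝒞, gp Nw x u) - gp Nw 0 u)
          - ((∑ x ∈ C1, gp Nw x u) - N₁ * gp Nw 0 u) := by
      unfold fsig
      rw [hsplit u, mul_sub, mul_inv_cancel_left₀ hNtotR.ne', hNcast]
      ring
    rw [e]
    have h1 : |Ntot * (Ntot⁻¹ * (∑ x ∈ 𝒞, gp Nw x u) - gp Nw 0 u)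
        - ((∑ x ∈ C1, gp Nw x u) - N₁ * gp Nw 0 u)|
        ≤ |Ntot * (Ntot⁻¹ * (∑ x ∈ 𝒞, gp Nw x u) - gp Nw 0 u)|
          + |(∑ x ∈ C1, gp Nw x u) - N₁ * gp Nw 0 u| := abs_sub _ _
    have h2 : |Ntot * (Ntot⁻¹ * (∑ x ∈ 𝒞, gp Nw x u) - gp Nw 0 u)|
        = Ntot * |Ntot⁻¹ * (∑ x ∈ 𝒞, gp Nw x u) - gp Nw 0 u| := by
      rw [abs_mul, abs_of_pos hNtotR]
    have h3 : |(∑ x ∈ C1, gp Nw x u) - N₁ * gp Nw 0 u|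
        ≤ (∑ x ∈ C1, gp Nw x u) + N₁ * gp Nw 0 u := by
      have ha : (0:ℝ) ≤ ∑ x ∈ C1, gp Nw x u :=
        Finset.sum_nonneg fun x _ => gp_nonneg _ _ _
      have hb : (0:ℝ) ≤ N₁ * gp Nw 0 u :=
        mul_nonneg (by rw [hN₁def]; exact Nat.cast_nonneg _) (gp_nonneg _ _ _)
      calc |(∑ x ∈ C1, gp Nw x u) - N₁ * gp Nw 0 u|
          ≤ |(∑ x ∈ C1, gp Nw x u)| + |N₁ * gp Nw 0 u| := abs_sub _ _
        _ = (∑ x ∈ C1, gp Nw x u) + N₁ * gp Nw 0 u := by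
            rw [abs_of_nonneg ha, abs_of_nonneg hb]
    linarith
  -- integr||ability facts
  have hint_full : Integrable (fun u : Fin n → ℝ =>
      Ntot⁻¹ * (∑ x ∈ 𝒞, gp Nw x u) - gp Nw 0 u) :=
    ((integrable_finset_sum _ (fun x _ => integrable_gp hNw x)).const_mul _).sub
      (integrable_gp hNw 0)
  have hint_C1 : Integrable (fun u : Fin n → ℝ => ∑ x ∈ C1, gp Nw x u) :=
    integrable_finset_sum _ (fun x _ => integrable_gp hNw x)
  have hI2 : ∫ u, |fsig Nw C2 k u| ≤ 2 * Ntot * δ + 2 * N₁ := by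
    have step1 : ∫ u, |fsig Nw C2 k u|
        ≤ ∫ u, (Ntot * |Ntot⁻¹ * (∑ x ∈ 𝒞, gp Nw x u) - gp Nw 0 u|
            + ((∑ x ∈ C1, gp Nw x u) + N₁ * gp Nw 0 u)) := by
      apply integral_mono_of_nonneg (ae_of_all _ fun u => abs_nonneg _)
        ((hint_full.abs.const_mul Ntot).add
          (hint_C1.add ((integrable_gp hNw 0).const_mul N₁)))
      exact ae_of_all _ hpoint
    have step2 : ∫ u, (Ntot * |Ntot⁻¹ * (∑ x ∈ 𝒞, gp Nw x u) - gp Nw 0 u|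
          + ((∑ x ∈ C1, gp Nw x u) + N₁ * gp Nw 0 u))
        = Ntot * (∫ u, |Ntot⁻¹ * (∑ x ∈ 𝒞, gp Nw x u) - gp Nw 0 u|) + (N₁ + N₁) := by
      rw [integral_add (hint_full.abs.const_mul Ntot)
          (show Integrable (fun u : Fin n → ℝ =>
              (∑ x ∈ C1, gp Nw x u) + N₁ * gp Nw 0 u) volume from
            hint_C1.add ((integrable_gp hNw 0).const_mul N₁)),
        integral_add hint_C1 ((integrable_gp hNw 0).const_mul N₁),
        integral_const_mul, integral_const_mul, integral_gp hNw, mul_one,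
        integral_finset_sum _ (fun x _ => integrable_gp hNw x)]
      simp only [integral_gp hNw]
      rw [Finset.sum_const, nsmul_eq_mul, mul_one, ← hN₁def]
    have step3 : ∫ u, |Ntot⁻¹ * (∑ x ∈ 𝒞, gp Nw x u) - gp Nw 0 u| ≤ 2 * δ := by
      have := hV
      simp only [gp_def', prod_q0_eq] at this
      linarith only [this]
    rw [step2] at step1
    have : Ntot * (∫ u, |Ntot⁻¹ * (∑ x ∈ 𝒞, gp Nw x u) - gp Nw 0 u|) ≤ Ntot * (2 * δ) :=
      mul_le_mul_of_nonneg_left step3 hNtotR.le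
    linarith
  -- final chain
  have hchain : k * (δ + 2 * γ) ≤ Ntot * δ + N₁ := by
    have h5 : δ + 2 * γ ≤ (1 / 2) * (k⁻¹ * (2 * Ntot * δ + 2 * N₁)) := by
      have hmono : (1 / 2) * (k⁻¹ *
          ∫ z, |(∑ x ∈ C2, gp Nw (fun i => c * x i) z) - k * gp Nw 0 z|)
          ≤ (1 / 2) * (k⁻¹ * (2 * Ntot * δ + 2 * N₁)) := by
        apply mul_le_mul_of_nonneg_left _ (by norm_num : (0:ℝ) ≤ 1/2)
        apply mul_le_mul_of_nonneg_left _ (inv_pos.2 hkR).le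
        exact le_trans hcontr hI2
      linarith only [hlow2, hmono]
    have hid : k * ((1 / 2) * (k⁻¹ * (2 * Ntot * δ + 2 * N₁))) = Ntot * δ + N₁ := by
      field_simp
    calc k * (δ + 2 * γ) ≤ k * ((1 / 2) * (k⁻¹ * (2 * Ntot * δ + 2 * N₁))) :=
        mul_le_mul_of_nonneg_left h5 hkR.le
      _ = Ntot * δ + N₁ := hid
  -- derive the numeric contradiction
  have hconR : N₁ < γ * Ntot := by
    rw [hN₁def, hNtotdef]
    exact hcon
  have hB'pos : 0 < 2 * ν ^ 2 / (Real.sqrt (Real.pi * n) * Nw ^ 2) := by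
    have : (0:ℝ) < Real.pi * n := by positivity
    have h' : 0 < Real.sqrt (Real.pi * n) := Real.sqrt_pos.2 this
    positivity
  have hδ2γ : δ + 2 * γ < 1 := by
    have h := hθ.1
    linarith only [h, hB'pos]
  have hkeq : k = Ntot - N₁ := by linarith only [hNcast]
  rw [hkeq] at hchain
  have h2' : 2 * γ * Ntot ≤ N₁ * (1 + δ + 2 * γ) := by linarith only [hchain]
  have h13pos : (0:ℝ) < 1 + δ + 2 * γ := by linarith only [hδ.1, hγ.1]
  have h3' : N₁ * (1 + δ + 2 * γ) < (γ * Ntot) * (1 + δ + 2 * γ) :=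
    mul_lt_mul_of_pos_right hconR h13pos
  have hT : 0 < γ * Ntot := mul_pos hγpos hNtotR
  have h4' : (γ * Ntot) * (δ + 2 * γ) < (γ * Ntot) * 1 :=
    mul_lt_mul_of_pos_left hδ2γ hT
  linarith only [h2', h3', h4']
end
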